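/- Define u(t,x) = exp(ψ(t) e^{2λt}) · exp(−a(t)x²/2) with a(t) = λ a₀ e^{2λt}/(λ − a₀ + a₀ e^{2λt}) and ψ(t) = ln b₀ − (a₀/2)·(ln λ − ln(a₀ + (λ−a₀)e^{−2λt}))/(λ − a₀) (assuming a₀ ≠ λ). Then u satisfies ∂ₜu = ∂ₓₓu + λ u ln(u²) for all t > 0, x ∈ ℝ, and u(0,x) = b₀ e^{−a₀x²/2}. -/

import Mathlib

theorem gaussian_solution_pde (lam a₀ b₀ : ℝ) (hlam : 0 < lam) (ha₀ : 0 < a₀)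
    (hb₀ : 0 < b₀) (hne : a₀ ≠ lam)
    (a : ℝ → ℝ)
    (ha : ∀ t, a t = lam * a₀ * Real.exp (2 * lam * t) /
        (lam - a₀ + a₀ * Real.exp (2 * lam * t)))
    (ψ : ℝ → ℝ)
    (hψ : ∀ t, ψ t = Real.log b₀ - (a₀ / 2) *
        (Real.log lam - Real.log (a₀ + (lam - a₀) * Real.exp (-(2 * lam * t)))) / (lam - a₀))
    (u : ℝ → ℝ → ℝ)
    (hu : ∀ t x, u t x = Real.exp (ψ t * Real.exp (2 * lam * t)) *
        Real.exp (-(a t * x ^ 2 / 2))) :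
    (∀ t > (0:ℝ), ∀ x : ℝ,
      deriv (fun τ => u τ x) t =
        deriv (deriv (fun y => u t y)) x + lam * u t x * Real.log ((u t x) ^ 2)) ∧
    (∀ x : ℝ, u 0 x = b₀ * Real.exp (-(a₀ * x ^ 2 / 2))) := by
  constructor
  · intro t ht x
    have hlamne : lam - a₀ ≠ 0 := sub_ne_zero.2 (Ne.symm hne)
    have hEpos : 0 < Real.exp (2 * lam * t) := Real.exp_pos _
    have hE1 : 1 ≤ Real.exp (2 * lam * t) := Real.one_le_exp (by positivity)
    have hD : 0 < lam - a₀ + a₀ * Real.exp (2 * lam * t) := by nlinarith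
    have hEinv : Real.exp (-(2 * lam * t)) = (Real.exp (2 * lam * t))⁻¹ := by
      rw [Real.exp_neg]
    have hFpos : 0 < a₀ + (lam - a₀) * Real.exp (-(2 * lam * t)) := by
      rw [hEinv]
      have h1 : 0 < (Real.exp (2 * lam * t))⁻¹ := by positivity
      have h2 : (Real.exp (2 * lam * t))⁻¹ ≤ 1 := by
        rw [inv_le_one_iff₀]; right; exact hE1
      nlinarith [mul_pos hlam h1, mul_pos ha₀ h1]
    -- basic exponential derivatives
    have h0 : HasDerivAt (fun τ : ℝ => 2 * lam * τ) (2 * lam) t := by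
      simpa using (hasDerivAt_id t).const_mul (2 * lam)
    have hEderiv : HasDerivAt (fun τ => Real.exp (2 * lam * τ))
        (Real.exp (2 * lam * t) * (2 * lam)) t := h0.exp
    -- derivative of a
    have hnum : HasDerivAt (fun τ => lam * a₀ * Real.exp (2 * lam * τ))
        (lam * a₀ * (Real.exp (2 * lam * t) * (2 * lam))) t := hEderiv.const_mul _
    have hden : HasDerivAt (fun τ => lam - a₀ + a₀ * Real.exp (2 * lam * τ))
        (a₀ * (Real.exp (2 * lam * t) * (2 * lam))) t := (hEderiv.const_mul a₀).const_add _
    have haD : HasDerivAt a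
        ((lam * a₀ * (Real.exp (2 * lam * t) * (2 * lam)) * (lam - a₀ + a₀ * Real.exp (2 * lam * t))
          - lam * a₀ * Real.exp (2 * lam * t) * (a₀ * (Real.exp (2 * lam * t) * (2 * lam))))
          / (lam - a₀ + a₀ * Real.exp (2 * lam * t)) ^ 2) t := by
      rw [funext ha]; exact hnum.div hden hD.ne'
    have haval : (lam * a₀ * (Real.exp (2 * lam * t) * (2 * lam)) * (lam - a₀ + a₀ * Real.exp (2 * lam * t))
          - lam * a₀ * Real.exp (2 * lam * t) * (a₀ * (Real.exp (2 * lam * t) * (2 * lam))))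
          / (lam - a₀ + a₀ * Real.exp (2 * lam * t)) ^ 2
        = 2 * lam * a t - 2 * (a t) ^ 2 := by
      rw [ha t]; field_simp
    have ha' : HasDerivAt a (2 * lam * a t - 2 * (a t) ^ 2) t := haval ▸ haD
    -- derivative of ψ
    have hF : HasDerivAt (fun τ => a₀ + (lam - a₀) * Real.exp (-(2 * lam * τ)))
        ((lam - a₀) * (Real.exp (-(2 * lam * t)) * -(2 * lam))) t :=
      ((h0.neg.exp).const_mul (lam - a₀)).const_add a₀
    have hlogF : HasDerivAt (fun τ => Real.log (a₀ + (lam - a₀) * Real.exp (-(2 * lam * τ))))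
        ((lam - a₀) * (Real.exp (-(2 * lam * t)) * -(2 * lam))
          / (a₀ + (lam - a₀) * Real.exp (-(2 * lam * t)))) t := hF.log hFpos.ne'
    have hψD : HasDerivAt ψ
        (-(a₀ / 2 * -((lam - a₀) * (Real.exp (-(2 * lam * t)) * -(2 * lam))
          / (a₀ + (lam - a₀) * Real.exp (-(2 * lam * t)))) / (lam - a₀))) t := by
      rw [funext hψ]
      exact (((hlogF.const_sub (Real.log lam)).const_mul (a₀ / 2)).div_const (lam - a₀)).const_sub
        (Real.log b₀)
    have key : (-(a₀ / 2 * -((lam - a₀) * (Real.exp (-(2 * lam * t)) * -(2 * lam))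
          / (a₀ + (lam - a₀) * Real.exp (-(2 * lam * t)))) / (lam - a₀))) * Real.exp (2 * lam * t)
        = -(a t) := by
      have h1 : Real.exp (-(2 * lam * t)) * Real.exp (2 * lam * t) = 1 := by
        rw [← Real.exp_add]; norm_num
      rw [ha t]
      field_simp [hFpos.ne']
      linear_combination (-a₀) * h1
    -- time derivative of u
    have hg : HasDerivAt (fun τ => ψ τ * Real.exp (2 * lam * τ))
        ((-(a₀ / 2 * -((lam - a₀) * (Real.exp (-(2 * lam * t)) * -(2 * lam))
          / (a₀ + (lam - a₀) * Real.exp (-(2 * lam * t)))) / (lam - a₀))) * Real.exp (2 * lam * t)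
          + ψ t * (Real.exp (2 * lam * t) * (2 * lam))) t := hψD.mul hEderiv
    have h2t : HasDerivAt (fun τ => Real.exp (-(a τ * x ^ 2 / 2)))
        (Real.exp (-(a t * x ^ 2 / 2)) * -((2 * lam * a t - 2 * (a t) ^ 2) * x ^ 2 / 2)) t :=
      (((ha'.mul_const (x ^ 2)).div_const 2).neg).exp
    have hut : HasDerivAt (fun τ => u τ x)
        (Real.exp (ψ t * Real.exp (2 * lam * t)) *
            ((-(a₀ / 2 * -((lam - a₀) * (Real.exp (-(2 * lam * t)) * -(2 * lam))
              / (a₀ + (lam - a₀) * Real.exp (-(2 * lam * t)))) / (lam - a₀))) * Real.exp (2 * lam * t)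
              + ψ t * (Real.exp (2 * lam * t) * (2 * lam))) * Real.exp (-(a t * x ^ 2 / 2))
          + Real.exp (ψ t * Real.exp (2 * lam * t)) *
            (Real.exp (-(a t * x ^ 2 / 2)) * -((2 * lam * a t - 2 * (a t) ^ 2) * x ^ 2 / 2))) t := by
      have hfeq : (fun τ => u τ x) = fun τ => Real.exp (ψ τ * Real.exp (2 * lam * τ)) *
          Real.exp (-(a τ * x ^ 2 / 2)) := funext fun τ => hu τ x
      rw [hfeq]
      exact hg.exp.mul h2t
    -- spatial derivatives
    have hx1 : ∀ y : ℝ, HasDerivAt (fun y => u t y) (u t y * (-(a t) * y)) y := by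
      intro y
      have hq : HasDerivAt (fun y : ℝ => -(a t * y ^ 2 / 2)) (-(a t) * y) y := by
        have := (((hasDerivAt_pow 2 y).const_mul (a t)).div_const 2).neg
        exact this.congr_deriv (by simp; ring)
      have hm := hq.exp.const_mul (Real.exp (ψ t * Real.exp (2 * lam * t)))
      have hfeq : (fun y => u t y) = fun y => Real.exp (ψ t * Real.exp (2 * lam * t)) *
          Real.exp (-(a t * y ^ 2 / 2)) := funext fun y => hu t y
      rw [hfeq, hu t y]
      exact hm.congr_deriv (by ring)
    have hxfun : deriv (fun y => u t y) = fun y => u t y * (-(a t) * y) :=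
      funext fun y => (hx1 y).deriv
    have hx2 : HasDerivAt (fun y => u t y * (-(a t) * y))
        (u t x * (-(a t) * x) * (-(a t) * x) + u t x * (-(a t))) x := by
      have hid : HasDerivAt (fun y : ℝ => -(a t) * y) (-(a t)) x := by
        simpa using (hasDerivAt_id x).const_mul (-(a t))
      have := (hx1 x).mul hid
      exact this
    have hlog : Real.log ((u t x) ^ 2) = 2 * (ψ t * Real.exp (2 * lam * t) + -(a t * x ^ 2 / 2)) := by
      rw [hu t x, ← Real.exp_add, Real.log_pow, Real.log_exp]
      push_cast; ring
    rw [hut.deriv, hxfun, hx2.deriv, hlog, hu t x]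
    linear_combination (Real.exp (ψ t * Real.exp (2 * lam * t)) *
      Real.exp (-(a t * x ^ 2 / 2))) * key
  · intro x
    have h2 : a 0 = a₀ := by
      rw [ha 0]
      norm_num
      field_simp [hlam.ne']
    have h3 : ψ 0 = Real.log b₀ := by
      rw [hψ 0]
      norm_num
    rw [hu 0 x, h2, h3]
    simp [Real.exp_log hb₀]
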